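/- (Theorem 2, near-optimality of the finite-horizon value.) Under Condition 1 and Assumption SA1, let α ∈ (0,1) satisfy αP̄ ⪯ Q_i for all i ∈ 𝕄 and α₀ > 0 satisfy α₀(P̄ − P̲) ⪯ Q_i for all i ∈ 𝕄. Then for every integer d > 1 and every x ∈ ℝⁿ, V*(x) − V*_d(x) ≤ (1/α₀)·(1−α)^{d−1}·xᵀP̄x, where V*(x) is real-valued (finite) by SA1. -/

import Mathlib

open Matrix Filter
open scoped ENNReal

/-- Data of a switched linear-quadratic problem with `M` modes,
state dimension `n` and continuous-input dimension `m`. -/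
structure SwitchedLQR (n m M : ℕ) where
  A : Fin M → Matrix (Fin n) (Fin n) ℝ
  B : Fin M → Matrix (Fin n) (Fin m) ℝ
  Q : Fin M → Matrix (Fin n) (Fin n) ℝ
  R : Fin M → Matrix (Fin m) (Fin m) ℝ

namespace SwitchedLQR

variable {n m M : ℕ}

/-- Stage cost `ℓ(x,u,i) = xᵀQᵢx + uᵀRᵢu`. -/
def ell (S : SwitchedLQR n m M) (x : Fin n → ℝ) (u : Fin m → ℝ) (i : Fin M) : ℝ :=
  x ⬝ᵥ ((S.Q i) *ᵥ x) + u ⬝ᵥ ((S.R i) *ᵥ u)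

/-- Riccati operator `𝓡ᵢ(P)`. -/
noncomputable def Ric (S : SwitchedLQR n m M) (i : Fin M)
    (P : Matrix (Fin n) (Fin n) ℝ) : Matrix (Fin n) (Fin n) ℝ :=
  S.Q i + (S.A i)ᵀ * P * S.A i -
    (S.A i)ᵀ * P * S.B i * (S.R i + (S.B i)ᵀ * P * S.B i)⁻¹ * ((S.B i)ᵀ * P * S.A i)

/-- `P_𝐢 = 𝓡_{i₀}(𝓡_{i₁}(⋯𝓡_{i_{d-1}}(P̲)⋯))` for a finite mode sequence `𝐢`. -/
noncomputable def Pseq (S : SwitchedLQR n m M) (Pund : Matrix (Fin n) (Fin n) ℝ)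
    (l : List (Fin M)) : Matrix (Fin n) (Fin n) ℝ :=
  l.foldr S.Ric Pund

/-- Solution `φ(k,x,u,i)` of the switched linear system. -/
def phi (S : SwitchedLQR n m M) (x : Fin n → ℝ) (u : ℕ → Fin m → ℝ) (is : ℕ → Fin M) :
    ℕ → Fin n → ℝ
  | 0 => x
  | k + 1 => S.A (is k) *ᵥ (phi S x u is k) + S.B (is k) *ᵥ (u k)

/-- Finite-horizon cost `J_d` with terminal cost matrix `P̲`. -/
noncomputable def Jd (S : SwitchedLQR n m M) (Pund : Matrix (Fin n) (Fin n) ℝ) (d : ℕ)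
    (x : Fin n → ℝ) (u : ℕ → Fin m → ℝ) (is : ℕ → Fin M) : ℝ :=
  (∑ k ∈ Finset.range d, S.ell (S.phi x u is k) (u k) (is k)) +
    (S.phi x u is d) ⬝ᵥ (Pund *ᵥ (S.phi x u is d))

/-- Infinite-horizon cost `J(x,u,i) ∈ [0,∞]`. -/
noncomputable def Jinf (S : SwitchedLQR n m M) (x : Fin n → ℝ) (u : ℕ → Fin m → ℝ)
    (is : ℕ → Fin M) : ℝ≥0∞ :=
  ∑' k : ℕ, ENNReal.ofReal (S.ell (S.phi x u is k) (u k) (is k))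

/-- Optimal value function `V*(x)`. -/
noncomputable def Vstar (S : SwitchedLQR n m M) (x : Fin n → ℝ) : ℝ≥0∞ :=
  ⨅ (u : ℕ → Fin m → ℝ) (is : ℕ → Fin M), S.Jinf x u is

/-- `V*_d(x)`: minimum over length-`d` mode sequences `𝐢` of `xᵀP_𝐢x`. -/
noncomputable def Vd (S : SwitchedLQR n m M) (Pund : Matrix (Fin n) (Fin n) ℝ) (d : ℕ)
    (x : Fin n → ℝ) : ℝ :=
  sInf {r : ℝ | ∃ l : List (Fin M), l.length = d ∧ r = x ⬝ᵥ ((S.Pseq Pund l) *ᵥ x)}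

/-- Condition 1: the LMI block matrix is positive semi-definite for every mode. -/
def Cond1 (S : SwitchedLQR n m M) (Pund : Matrix (Fin n) (Fin n) ℝ) : Prop :=
  ∀ i : Fin M,
    (Matrix.fromBlocks
      ((S.A i)ᵀ * Pund * S.A i - Pund + S.Q i) ((S.A i)ᵀ * Pund * S.B i)
      ((S.B i)ᵀ * Pund * S.A i) (S.R i + (S.B i)ᵀ * Pund * S.B i)).PosSemidef

/-- Assumption SA1. -/
def SA1 (S : SwitchedLQR n m M) (Pbar : Matrix (Fin n) (Fin n) ℝ) : Prop :=
  Pbar.PosDef ∧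
    ∀ x : Fin n → ℝ, ∃ (u : ℕ → Fin m → ℝ) (is : ℕ → Fin M),
      S.Jinf x u is = S.Vstar x ∧ S.Vstar x ≤ ENNReal.ofReal (x ⬝ᵥ (Pbar *ᵥ x))

/-- `H*_d(x)`. -/
noncomputable def HStar (S : SwitchedLQR n m M) (Pund : Matrix (Fin n) (Fin n) ℝ) (d : ℕ)
    (x : Fin n → ℝ) : Set ((Fin m → ℝ) × Fin M) :=
  {p | S.Vd Pund d x =
        S.ell x p.1 p.2 + S.Vd Pund (d - 1) (S.A p.2 *ᵥ x + S.B p.2 *ᵥ p.1)}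

/-- `F_d(x)`. -/
noncomputable def Fd (S : SwitchedLQR n m M) (Pund : Matrix (Fin n) (Fin n) ℝ) (d : ℕ)
    (x : Fin n → ℝ) : Set (Fin n → ℝ) :=
  {y | ∃ p ∈ S.HStar Pund d x, y = S.A p.2 *ᵥ x + S.B p.2 *ᵥ p.1}

end SwitchedLQR

section Aux

namespace SwitchedLQR

variable {n m M : ℕ}

lemma quad_nonneg {k : ℕ} {P : Matrix (Fin k) (Fin k) ℝ} (hP : P.PosSemidef)
    (x : Fin k → ℝ) : 0 ≤ x ⬝ᵥ (P *ᵥ x) := by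
  simpa using hP.dotProduct_mulVec_nonneg x

lemma quad_mul_dot {a b : ℕ} (N : Matrix (Fin a) (Fin b) ℝ) (x : Fin b → ℝ) (y : Fin a → ℝ) :
    (N *ᵥ x) ⬝ᵥ y = x ⬝ᵥ (Nᵀ *ᵥ y) := by
  rw [Matrix.dotProduct_mulVec, Matrix.vecMul_transpose]

lemma quad_mul_mul {a b c : ℕ} (Nl : Matrix (Fin c) (Fin a) ℝ) (P : Matrix (Fin c) (Fin c) ℝ)
    (Nr : Matrix (Fin c) (Fin b) ℝ) (v : Fin a → ℝ) (w : Fin b → ℝ) :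
    (Nl *ᵥ v) ⬝ᵥ (P *ᵥ (Nr *ᵥ w)) = v ⬝ᵥ ((Nlᵀ * P * Nr) *ᵥ w) := by
  rw [quad_mul_dot, Matrix.mulVec_mulVec, Matrix.mulVec_mulVec]

lemma transpose_eq {k : ℕ} {P : Matrix (Fin k) (Fin k) ℝ} (hP : P.PosSemidef) : Pᵀ = P := by
  have h := hP.isHermitian
  rwa [Matrix.IsHermitian, Matrix.conjTranspose_eq_transpose_of_trivial] at h

lemma smul_sub_quad {k : ℕ} {P₁ P₂ : Matrix (Fin k) (Fin k) ℝ} {c : ℝ}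
    (h : (P₁ - c • P₂).PosSemidef) (x : Fin k → ℝ) :
    c * (x ⬝ᵥ (P₂ *ᵥ x)) ≤ x ⬝ᵥ (P₁ *ᵥ x) := by
  have h0 := quad_nonneg h x
  rw [Matrix.sub_mulVec, dotProduct_sub, Matrix.smul_mulVec,
    dotProduct_smul, smul_eq_mul] at h0
  linarith

/-- Completion of squares for one Riccati step. -/
lemma cos_quad {n m : ℕ} (A Q P : Matrix (Fin n) (Fin n) ℝ) (B : Matrix (Fin n) (Fin m) ℝ)
    (R : Matrix (Fin m) (Fin m) ℝ) (hPs : Pᵀ = P) (hRs : Rᵀ = R)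
    (hdet : IsUnit (R + Bᵀ * P * B).det) (x : Fin n → ℝ) :
    ∃ u : Fin m → ℝ,
      (x ⬝ᵥ (Q *ᵥ x) + u ⬝ᵥ (R *ᵥ u))
        + (A *ᵥ x + B *ᵥ u) ⬝ᵥ (P *ᵥ (A *ᵥ x + B *ᵥ u))
        = x ⬝ᵥ ((Q + Aᵀ * P * A - Aᵀ * P * B * (R + Bᵀ * P * B)⁻¹ * (Bᵀ * P * A)) *ᵥ x) := by
  set G := R + Bᵀ * P * B with hGdef
  set K := G⁻¹ * (Bᵀ * P * A) with hKdef
  have hGs : Gᵀ = G := by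
    rw [hGdef]
    simp [Matrix.transpose_add, Matrix.transpose_mul, hPs, hRs, Matrix.mul_assoc]
  have hGK : G * K = Bᵀ * P * A := by
    rw [hKdef, ← Matrix.mul_assoc, Matrix.mul_nonsing_inv _ hdet, Matrix.one_mul]
  have hKG : Kᵀ * G = Aᵀ * P * B := by
    have h := congrArg Matrix.transpose hGK
    rw [Matrix.transpose_mul, hGs] at h
    rw [h]
    simp [Matrix.transpose_mul, hPs, Matrix.mul_assoc]
  refine ⟨(-K) *ᵥ x, ?_⟩
  have hy : A *ᵥ x + B *ᵥ ((-K) *ᵥ x) = (A - B * K) *ᵥ x := by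
    rw [Matrix.mulVec_mulVec, Matrix.mul_neg, Matrix.neg_mulVec, Matrix.sub_mulVec,
      sub_eq_add_neg]
  rw [hy, quad_mul_mul, quad_mul_mul, ← dotProduct_add, ← dotProduct_add,
    ← Matrix.add_mulVec, ← Matrix.add_mulVec]
  simp only [Matrix.transpose_neg, Matrix.neg_mul, Matrix.mul_neg, neg_neg]
  -- matrix identity
  have h2 : Kᵀ * (Bᵀ * P * A) = Aᵀ * P * B * K := by
    rw [← hGK, ← Matrix.mul_assoc, hKG]
  have h4 : Aᵀ * P * B * G⁻¹ * (Bᵀ * P * A) = Aᵀ * P * B * K := by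
    rw [hKdef]; exact Matrix.mul_assoc _ _ _
  have h5 : Kᵀ * G * K = Kᵀ * R * K + Kᵀ * (Bᵀ * P * B) * K := by
    rw [hGdef, Matrix.mul_add, Matrix.add_mul]
  have h1 : Q + Kᵀ * R * K + (A - B * K)ᵀ * P * (A - B * K)
      = Q + Aᵀ * P * A - Aᵀ * P * B * K - Kᵀ * (Bᵀ * P * A)
        + (Kᵀ * R * K + Kᵀ * (Bᵀ * P * B) * K) := by
    simp only [Matrix.transpose_sub, Matrix.transpose_mul, Matrix.sub_mul, Matrix.mul_sub,
      Matrix.add_mul, Matrix.mul_add, Matrix.mul_assoc]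
    abel
  have hmat : Q + Kᵀ * R * K + (A - B * K)ᵀ * P * (A - B * K)
      = Q + Aᵀ * P * A - Aᵀ * P * B * G⁻¹ * (Bᵀ * P * A) := by
    rw [h1, ← h5, h2, hKG, h4]
    abel
  rw [hmat]

end SwitchedLQR
end Aux
section Aux2
namespace SwitchedLQR

variable {n m M : ℕ}

lemma Gdet (S : SwitchedLQR n m M) (i : Fin M) {P : Matrix (Fin n) (Fin n) ℝ}
    (hP : P.PosSemidef) (hR : (S.R i).PosDef) :
    IsUnit (S.R i + (S.B i)ᵀ * P * S.B i).det := by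
  have hBPB : ((S.B i)ᵀ * P * S.B i).PosSemidef := by
    have h := hP.conjTranspose_mul_mul_same (S.B i)
    rwa [Matrix.conjTranspose_eq_transpose_of_trivial] at h
  exact (hR.add_posSemidef hBPB).det_pos.ne'.isUnit

/-- One-step completion of squares for the Riccati operator. -/
lemma ric_step (S : SwitchedLQR n m M) (i : Fin M) {P : Matrix (Fin n) (Fin n) ℝ}
    (hP : P.PosSemidef) (hR : (S.R i).PosDef) (x : Fin n → ℝ) :
    ∃ u : Fin m → ℝ,
      S.ell x u i + (S.A i *ᵥ x + S.B i *ᵥ u) ⬝ᵥ (P *ᵥ (S.A i *ᵥ x + S.B i *ᵥ u))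
        = x ⬝ᵥ (S.Ric i P *ᵥ x) := by
  obtain ⟨u, hu⟩ := cos_quad (S.A i) (S.Q i) P (S.B i) (S.R i) (transpose_eq hP)
    (transpose_eq hR.posSemidef) (S.Gdet i hP hR) x
  exact ⟨u, by rw [SwitchedLQR.ell, SwitchedLQR.Ric]; exact hu⟩

lemma ric_ge_Q (S : SwitchedLQR n m M) (i : Fin M) {P : Matrix (Fin n) (Fin n) ℝ}
    (hP : P.PosSemidef) (hR : (S.R i).PosDef) (x : Fin n → ℝ) :
    x ⬝ᵥ (S.Q i *ᵥ x) ≤ x ⬝ᵥ (S.Ric i P *ᵥ x) := by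
  obtain ⟨u, hu⟩ := S.ric_step i hP hR x
  rw [SwitchedLQR.ell] at hu
  have h1 : 0 ≤ u ⬝ᵥ (S.R i *ᵥ u) := quad_nonneg hR.posSemidef u
  have h2 : 0 ≤ (S.A i *ᵥ x + S.B i *ᵥ u) ⬝ᵥ (P *ᵥ (S.A i *ᵥ x + S.B i *ᵥ u)) :=
    quad_nonneg hP _
  linarith

lemma ric_posSemidef (S : SwitchedLQR n m M) (i : Fin M) {P : Matrix (Fin n) (Fin n) ℝ}
    (hP : P.PosSemidef) (hQ : (S.Q i).PosDef) (hR : (S.R i).PosDef) :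
    (S.Ric i P).PosSemidef := by
  refine Matrix.PosSemidef.of_dotProduct_mulVec_nonneg ?_ ?_
  · have hPs : Pᵀ = P := transpose_eq hP
    have hQs : (S.Q i)ᵀ = S.Q i := transpose_eq hQ.posSemidef
    have hRs : (S.R i)ᵀ = S.R i := transpose_eq hR.posSemidef
    rw [Matrix.IsHermitian, Matrix.conjTranspose_eq_transpose_of_trivial, SwitchedLQR.Ric]
    simp [Matrix.transpose_sub, Matrix.transpose_add, Matrix.transpose_mul,
      Matrix.transpose_nonsing_inv, hPs, hQs, hRs, Matrix.mul_assoc]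
  · intro y
    rw [star_trivial]
    exact le_trans (quad_nonneg hQ.posSemidef y) (S.ric_ge_Q i hP hR y)

lemma pseq_posSemidef (S : SwitchedLQR n m M) (hQ : ∀ i : Fin M, (S.Q i).PosDef)
    (hR : ∀ i : Fin M, (S.R i).PosDef) {Pund : Matrix (Fin n) (Fin n) ℝ}
    (hPund : Pund.PosSemidef) : ∀ l : List (Fin M), (S.Pseq Pund l).PosSemidef := by
  intro l
  induction l with
  | nil => exact hPund
  | cons i t ih => exact S.ric_posSemidef i ih (hQ i) (hR i)

lemma cond1_le (S : SwitchedLQR n m M) {Pund : Matrix (Fin n) (Fin n) ℝ}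
    (hC : S.Cond1 Pund) (i : Fin M) (x : Fin n → ℝ) (u : Fin m → ℝ) :
    x ⬝ᵥ (Pund *ᵥ x) ≤
      S.ell x u i + (S.A i *ᵥ x + S.B i *ᵥ u) ⬝ᵥ (Pund *ᵥ (S.A i *ᵥ x + S.B i *ᵥ u)) := by
  have h := (hC i).dotProduct_mulVec_nonneg (Sum.elim x u)
  rw [star_trivial, Matrix.fromBlocks_mulVec, sumElim_dotProduct_sumElim] at h
  simp only [Matrix.add_mulVec, Matrix.sub_mulVec, dotProduct_add,
    dotProduct_sub, Sum.elim_comp_inl, Sum.elim_comp_inr] at h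
  rw [SwitchedLQR.ell, Matrix.mulVec_add, dotProduct_add, add_dotProduct,
    add_dotProduct, quad_mul_mul, quad_mul_mul, quad_mul_mul, quad_mul_mul]
  linarith

end SwitchedLQR
end Aux2
section Aux3

/-- Prepend an element to an infinite sequence. -/
def SLQRprep {β : Type*} (b : β) (f : ℕ → β) : ℕ → β
  | 0 => b
  | k + 1 => f k

@[simp] lemma SLQRprep_zero {β : Type*} (b : β) (f : ℕ → β) : SLQRprep b f 0 = b := rfl
@[simp] lemma SLQRprep_succ {β : Type*} (b : β) (f : ℕ → β) (k : ℕ) :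
    SLQRprep b f (k + 1) = f k := rfl

namespace SwitchedLQR

variable {n m M : ℕ}

lemma vstar_ne_top (S : SwitchedLQR n m M) {Pbar : Matrix (Fin n) (Fin n) ℝ}
    (hSA : S.SA1 Pbar) (x : Fin n → ℝ) : S.Vstar x ≠ ⊤ := by
  obtain ⟨u, is, -, hle⟩ := hSA.2 x
  exact ne_top_of_le_ne_top ENNReal.ofReal_ne_top hle

lemma vstar_toReal_le (S : SwitchedLQR n m M) {Pbar : Matrix (Fin n) (Fin n) ℝ}
    (hSA : S.SA1 Pbar) (x : Fin n → ℝ) : (S.Vstar x).toReal ≤ x ⬝ᵥ (Pbar *ᵥ x) := by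
  obtain ⟨u, is, -, hle⟩ := hSA.2 x
  have h := ENNReal.toReal_mono ENNReal.ofReal_ne_top hle
  rwa [ENNReal.toReal_ofReal (quad_nonneg hSA.1.posSemidef x)] at h

lemma ell_nonneg (S : SwitchedLQR n m M) (hQ : ∀ i : Fin M, (S.Q i).PosDef)
    (hR : ∀ i : Fin M, (S.R i).PosDef) (x : Fin n → ℝ) (u : Fin m → ℝ) (i : Fin M) :
    0 ≤ S.ell x u i :=
  add_nonneg (quad_nonneg (hQ i).posSemidef x) (quad_nonneg (hR i).posSemidef u)

lemma vstar_step (S : SwitchedLQR n m M) (x : Fin n → ℝ) (u₀ : Fin m → ℝ) (i₀ : Fin M) :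
    S.Vstar x ≤ ENNReal.ofReal (S.ell x u₀ i₀) + S.Vstar (S.A i₀ *ᵥ x + S.B i₀ *ᵥ u₀) := by
  set y := S.A i₀ *ᵥ x + S.B i₀ *ᵥ u₀ with hy
  have key : ∀ (u : ℕ → Fin m → ℝ) (is : ℕ → Fin M),
      S.Jinf x (SLQRprep u₀ u) (SLQRprep i₀ is)
        = ENNReal.ofReal (S.ell x u₀ i₀) + S.Jinf y u is := by
    intro u is
    have hphi : ∀ k, S.A (SLQRprep i₀ is k) *ᵥ S.phi x (SLQRprep u₀ u) (SLQRprep i₀ is) k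
        + S.B (SLQRprep i₀ is k) *ᵥ SLQRprep u₀ u k = S.phi y u is k := by
      intro k
      induction k with
      | zero => simp [SwitchedLQR.phi, hy]
      | succ k ihk =>
        simp only [SLQRprep_succ]
        rw [show S.phi x (SLQRprep u₀ u) (SLQRprep i₀ is) (k + 1)
            = S.A (SLQRprep i₀ is k) *ᵥ S.phi x (SLQRprep u₀ u) (SLQRprep i₀ is) k
              + S.B (SLQRprep i₀ is k) *ᵥ SLQRprep u₀ u k from rfl, ihk]
        rfl
    rw [SwitchedLQR.Jinf, tsum_eq_zero_add' ENNReal.summable]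
    congr 1
    refine tsum_congr fun k => ?_
    rw [show S.phi x (SLQRprep u₀ u) (SLQRprep i₀ is) (k + 1)
        = S.A (SLQRprep i₀ is k) *ᵥ S.phi x (SLQRprep u₀ u) (SLQRprep i₀ is) k
          + S.B (SLQRprep i₀ is k) *ᵥ SLQRprep u₀ u k from rfl, hphi k]
    rfl
  have h1 : S.Vstar x ≤
      ⨅ (u : ℕ → Fin m → ℝ) (is : ℕ → Fin M),
        (ENNReal.ofReal (S.ell x u₀ i₀) + S.Jinf y u is) :=
    le_iInf fun u => le_iInf fun is =>
      le_of_le_of_eq (iInf₂_le (SLQRprep u₀ u) (SLQRprep i₀ is)) (key u is)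
  have h2 : ENNReal.ofReal (S.ell x u₀ i₀) + S.Vstar y =
      ⨅ (u : ℕ → Fin m → ℝ) (is : ℕ → Fin M),
        (ENNReal.ofReal (S.ell x u₀ i₀) + S.Jinf y u is) := by
    rw [SwitchedLQR.Vstar, ENNReal.add_iInf]
    exact iInf_congr fun u => ENNReal.add_iInf
  rw [h2]
  exact h1

lemma vstar_real_step (S : SwitchedLQR n m M) (hQ : ∀ i : Fin M, (S.Q i).PosDef)
    (hR : ∀ i : Fin M, (S.R i).PosDef) {Pbar : Matrix (Fin n) (Fin n) ℝ}
    (hSA : S.SA1 Pbar) (x : Fin n → ℝ) (u₀ : Fin m → ℝ) (i₀ : Fin M) :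
    (S.Vstar x).toReal ≤
      S.ell x u₀ i₀ + (S.Vstar (S.A i₀ *ᵥ x + S.B i₀ *ᵥ u₀)).toReal := by
  have h := S.vstar_step x u₀ i₀
  have hne : ENNReal.ofReal (S.ell x u₀ i₀)
      + S.Vstar (S.A i₀ *ᵥ x + S.B i₀ *ᵥ u₀) ≠ ⊤ :=
    ENNReal.add_ne_top.2 ⟨ENNReal.ofReal_ne_top, S.vstar_ne_top hSA _⟩
  have h2 := ENNReal.toReal_mono hne h
  rwa [ENNReal.toReal_add ENNReal.ofReal_ne_top (S.vstar_ne_top hSA _),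
    ENNReal.toReal_ofReal (S.ell_nonneg hQ hR x u₀ i₀)] at h2

end SwitchedLQR
end Aux3
section Aux4
namespace SwitchedLQR

variable {n m M : ℕ}

lemma main_ind (S : SwitchedLQR n m M) (hQ : ∀ i : Fin M, (S.Q i).PosDef)
    (hR : ∀ i : Fin M, (S.R i).PosDef) {Pund : Matrix (Fin n) (Fin n) ℝ}
    (hPund : Pund.PosSemidef) (hC : S.Cond1 Pund)
    {Pbar : Matrix (Fin n) (Fin n) ℝ} (hSA : S.SA1 Pbar)
    {α : ℝ} (hα0 : 0 < α) (hα1 : α < 1)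
    (hαQ : ∀ i : Fin M, (S.Q i - α • Pbar).PosSemidef)
    {α₀ : ℝ} (hα₀ : 0 < α₀)
    (hα₀Q : ∀ i : Fin M, (S.Q i - α₀ • (Pbar - Pund)).PosSemidef) :
    ∀ l : List (Fin M), l ≠ [] → ∀ x : Fin n → ℝ,
      x ⬝ᵥ (S.Pseq Pund l *ᵥ x) ≤ (S.Vstar x).toReal →
      (S.Vstar x).toReal - x ⬝ᵥ (S.Pseq Pund l *ᵥ x) ≤
        1 / α₀ * (1 - α) ^ (l.length - 1) * (x ⬝ᵥ (S.Pseq Pund l *ᵥ x)) := by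
  intro l
  induction l with
  | nil => exact fun h => absurd rfl h
  | cons i t ih =>
    intro _ x hle
    have hcons : S.Pseq Pund (i :: t) = S.Ric i (S.Pseq Pund t) := rfl
    rcases eq_or_ne t [] with rfl | htne
    · -- base case : t = []
      have hP1 : S.Pseq Pund [i] = S.Ric i Pund := rfl
      rw [hP1] at hle ⊢
      obtain ⟨u, hu⟩ := S.ric_step i hPund (hR i) x
      have h2 : x ⬝ᵥ (Pund *ᵥ x) ≤ x ⬝ᵥ (S.Ric i Pund *ᵥ x) := by
        have hc := S.cond1_le hC i x u
        linarith
      have h3 := smul_sub_quad (hα₀Q i) x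
      rw [Matrix.sub_mulVec, dotProduct_sub] at h3
      have h4 := S.ric_ge_Q i hPund (hR i) x
      have hub := S.vstar_toReal_le hSA x
      have hlen : (([i] : List (Fin M)).length - 1) = 0 := rfl
      rw [hlen, pow_zero]
      rw [show (1 : ℝ) / α₀ * 1 * (x ⬝ᵥ (S.Ric i Pund *ᵥ x))
          = x ⬝ᵥ (S.Ric i Pund *ᵥ x) / α₀ by ring, le_div_iff₀ hα₀]
      nlinarith [mul_le_mul_of_nonneg_left hub hα₀.le, mul_le_mul_of_nonneg_left h2 hα₀.le]
    · -- inductive step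
      have hPt : (S.Pseq Pund t).PosSemidef := S.pseq_posSemidef hQ hR hPund t
      obtain ⟨u, hu⟩ := S.ric_step i hPt (hR i) x
      rw [← hcons] at hu
      set y := S.A i *ᵥ x + S.B i *ᵥ u with hy
      have hBell := S.vstar_real_step hQ hR hSA x u i
      rw [← hy] at hBell
      have hle' : y ⬝ᵥ (S.Pseq Pund t *ᵥ y) ≤ (S.Vstar y).toReal := by linarith
      have IH := ih htne y hle'
      have hellge : α * (x ⬝ᵥ (Pbar *ᵥ x)) ≤ S.ell x u i := by
        have h5 := smul_sub_quad (hαQ i) x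
        have h6 : 0 ≤ u ⬝ᵥ (S.R i *ᵥ u) := quad_nonneg (hR i).posSemidef u
        rw [SwitchedLQR.ell]
        linarith
      have hub := S.vstar_toReal_le hSA x
      have hrle : x ⬝ᵥ (S.Pseq Pund (i :: t) *ᵥ x) ≤ x ⬝ᵥ (Pbar *ᵥ x) := le_trans hle hub
      have hyPtle : y ⬝ᵥ (S.Pseq Pund t *ᵥ y)
          ≤ (1 - α) * (x ⬝ᵥ (S.Pseq Pund (i :: t) *ᵥ x)) := by
        nlinarith [mul_le_mul_of_nonneg_left hrle hα0.le]
      have hc : (0:ℝ) ≤ 1 / α₀ * (1 - α) ^ (t.length - 1) := by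
        have h1α : (0:ℝ) ≤ 1 - α := by linarith
        positivity
      have hchain : (S.Vstar x).toReal - x ⬝ᵥ (S.Pseq Pund (i :: t) *ᵥ x)
          ≤ 1 / α₀ * (1 - α) ^ (t.length - 1)
            * ((1 - α) * (x ⬝ᵥ (S.Pseq Pund (i :: t) *ᵥ x))) := by
        have := mul_le_mul_of_nonneg_left hyPtle hc
        linarith
      have hlen : t.length - 1 + 1 = t.length := Nat.succ_pred_eq_of_pos
        (List.length_pos_iff.2 htne)
      have hlen2 : (i :: t).length - 1 = t.length := by simp
      rw [hlen2, ← hlen, pow_succ]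
      calc (S.Vstar x).toReal - x ⬝ᵥ (S.Pseq Pund (i :: t) *ᵥ x)
          ≤ 1 / α₀ * (1 - α) ^ (t.length - 1)
              * ((1 - α) * (x ⬝ᵥ (S.Pseq Pund (i :: t) *ᵥ x))) := hchain
        _ = 1 / α₀ * ((1 - α) ^ (t.length - 1) * (1 - α))
              * (x ⬝ᵥ (S.Pseq Pund (i :: t) *ᵥ x)) := by ring

end SwitchedLQR
end Aux4

/-- Theorem 2, near-optimality of the finite-horizon value: under
Condition 1 and SA1, with `α,α₀` as in eq. (8), for every integer `d > 1` and
every `x`, `V*(x)` is finite and `V*(x) - V*_d(x) ≤ (1/α₀)·(1-α)^{d-1}·xᵀP̄x`. -/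
theorem stmt16 {n m M : ℕ} (hn : 0 < n) (hm : 0 < m) (hM : 0 < M)
    (S : SwitchedLQR n m M)
    (hQ : ∀ i : Fin M, (S.Q i).PosDef) (hR : ∀ i : Fin M, (S.R i).PosDef)
    (Pund : Matrix (Fin n) (Fin n) ℝ) (hPund : Pund.PosSemidef)
    (hC : S.Cond1 Pund)
    (Pbar : Matrix (Fin n) (Fin n) ℝ) (hSA : S.SA1 Pbar)
    (α : ℝ) (hα0 : 0 < α) (hα1 : α < 1)
    (hαQ : ∀ i : Fin M, (S.Q i - α • Pbar).PosSemidef)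
    (α₀ : ℝ) (hα₀ : 0 < α₀)
    (hα₀Q : ∀ i : Fin M, (S.Q i - α₀ • (Pbar - Pund)).PosSemidef) :
    ∀ (d : ℕ), 1 < d → ∀ x : Fin n → ℝ,
      S.Vstar x ≠ ⊤ ∧
      (S.Vstar x).toReal - S.Vd Pund d x ≤
        1 / α₀ * (1 - α) ^ (d - 1) * (x ⬝ᵥ (Pbar *ᵥ x)) := by
  intro d hd x
  refine ⟨S.vstar_ne_top hSA x, ?_⟩
  have hVd_mem : S.Vd Pund d x ∈
      {r : ℝ | ∃ l : List (Fin M), l.length = d ∧ r = x ⬝ᵥ ((S.Pseq Pund l) *ᵥ x)} := by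
    rw [SwitchedLQR.Vd]
    have hfin : {r : ℝ | ∃ l : List (Fin M), l.length = d
        ∧ r = x ⬝ᵥ ((S.Pseq Pund l) *ᵥ x)}.Finite := by
      have heq : {r : ℝ | ∃ l : List (Fin M), l.length = d ∧ r = x ⬝ᵥ ((S.Pseq Pund l) *ᵥ x)}
          = (fun l : List (Fin M) => x ⬝ᵥ ((S.Pseq Pund l) *ᵥ x)) '' {l | l.length = d} := by
        ext r
        simp only [Set.mem_setOf_eq, Set.mem_image]
        constructor
        · rintro ⟨l, hl, rfl⟩; exact ⟨l, hl, rfl⟩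
        · rintro ⟨l, hl, rfl⟩; exact ⟨l, hl, rfl⟩
      rw [heq]
      exact (List.finite_length_eq (Fin M) d).image _
    have hne : {r : ℝ | ∃ l : List (Fin M), l.length = d
        ∧ r = x ⬝ᵥ ((S.Pseq Pund l) *ᵥ x)}.Nonempty :=
      ⟨_, ⟨List.replicate d ⟨0, hM⟩, List.length_replicate, rfl⟩⟩
    exact hne.csInf_mem hfin
  obtain ⟨l, hlen, heq⟩ := hVd_mem
  have hlne : l ≠ [] := by
    intro h
    rw [h] at hlen
    simp at hlen
    omega
  have hq0 : 0 ≤ x ⬝ᵥ (Pbar *ᵥ x) := SwitchedLQR.quad_nonneg hSA.1.posSemidef x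
  have h1α : (0:ℝ) ≤ 1 - α := by linarith
  have hcoef : (0:ℝ) ≤ 1 / α₀ * (1 - α) ^ (d - 1) := by positivity
  rcases le_or_gt (x ⬝ᵥ (S.Pseq Pund l *ᵥ x)) ((S.Vstar x).toReal) with hch | hch
  · have hmain := S.main_ind hQ hR hPund hC hSA hα0 hα1 hαQ hα₀ hα₀Q l hlne x hch
    rw [hlen] at hmain
    have hub : x ⬝ᵥ (S.Pseq Pund l *ᵥ x) ≤ x ⬝ᵥ (Pbar *ᵥ x) :=
      le_trans hch (S.vstar_toReal_le hSA x)
    rw [heq]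
    calc (S.Vstar x).toReal - x ⬝ᵥ (S.Pseq Pund l *ᵥ x)
        ≤ 1 / α₀ * (1 - α) ^ (d - 1) * (x ⬝ᵥ (S.Pseq Pund l *ᵥ x)) := hmain
      _ ≤ 1 / α₀ * (1 - α) ^ (d - 1) * (x ⬝ᵥ (Pbar *ᵥ x)) :=
          mul_le_mul_of_nonneg_left hub hcoef
  · rw [heq]
    nlinarith [mul_nonneg hcoef hq0]
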